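/- Let X : [0,T] → ℝ be Hölder continuous with X_0 = 0: |X_t - X_{t'}| ≤ λ |τ_t - τ_{t'}|^α for all t,t', where τ : [0,T] → [0,∞) is nondecreasing with τ_T ≤ ℓ and α ∈ (0,1). Then for any δ ∈ (0, T], ω¹(X;δ) ≤ 2λδ ℓ^α + λ T^{1-α} δ^α ℓ^α, where ω¹(X;δ) := sup_{δ'∈(0,δ]} ( ∫_0^{δ'} (|X_t| + |X_{T-t}|) dt + ∫_{δ'}^T |X_t - X_{t-δ'}| dt ). -/

import Mathlib

open MeasureTheory Set

/-- Tangent-line inequality for the concave function `x ↦ x ^ α`, `0 < α < 1`. -/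
lemma rpow_le_tangent {x c α : ℝ} (hx : 0 ≤ x) (hc : 0 < c) (hα0 : 0 < α) (hα1 : α < 1) :
    x ^ α ≤ α * c ^ (α - 1) * x + (1 - α) * c ^ α := by
  have h := rpow_one_add_le_one_add_mul_self (s := x / c - 1) (by
      have : 0 ≤ x / c := div_nonneg hx hc.le
      linarith) hα0.le hα1.le
  rw [add_sub_cancel] at h
  have hdiv : (x / c) ^ α = x ^ α / c ^ α := Real.div_rpow hx hc.le α
  have hcα : 0 < c ^ α := Real.rpow_pos_of_pos hc α
  rw [hdiv, div_le_iff₀ hcα] at h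
  calc x ^ α ≤ (1 + α * (x / c - 1)) * c ^ α := h
    _ = α * (c ^ α / c) * x + (1 - α) * c ^ α := by ring
    _ = α * c ^ (α - 1) * x + (1 - α) * c ^ α := by rw [← Real.rpow_sub_one hc.ne']

/-- The `L¹`-continuity modulus `ω¹(X;δ)` of `X : [0,T] → ℝ` regarded as an element of
`L¹(ℝ)` extended by zero outside `[0,T]`. -/
noncomputable def omega1 (T : ℝ) (z : ℝ → ℝ) (δ : ℝ) : ℝ :=
  ⨆ δ' : {x : ℝ // 0 < x ∧ x ≤ δ},
    ((∫ t in Ioc (0 : ℝ) δ'.1, (|z t| + |z (T - t)|)) +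
      ∫ t in Ioc (δ'.1) T, |z t - z (t - δ'.1)|)

/-- if `X : [0,T] → ℝ`, `X 0 = 0`, is Hölder continuous with respect to a
nondecreasing time change `τ` with `τ_T ≤ ℓ`, namely `|X_t - X_{t'}| ≤ λ |τ_t - τ_{t'}|^α`,
then for every `δ ∈ (0,T]` one has `ω¹(X;δ) ≤ 2λδℓ^α + λT^{1-α}δ^α ℓ^α`. -/
theorem stmt_9 (T ℓ lam α : ℝ) (X τ : ℝ → ℝ)
    (hT : 0 < T) (hα : α ∈ Set.Ioo (0 : ℝ) 1) (hlam : 0 ≤ lam)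
    (hX0 : X 0 = 0)
    (hτmono : MonotoneOn τ (Icc 0 T)) (hτnn : ∀ t ∈ Icc (0 : ℝ) T, 0 ≤ τ t)
    (hτT : τ T ≤ ℓ)
    (hHolder : ∀ t ∈ Icc (0 : ℝ) T, ∀ t' ∈ Icc (0 : ℝ) T,
      |X t - X t'| ≤ lam * |τ t - τ t'| ^ α)
    (δ : ℝ) (hδ : δ ∈ Set.Ioc (0 : ℝ) T) :
    omega1 T X δ ≤ 2 * lam * δ * ℓ ^ α + lam * T ^ (1 - α) * δ ^ α * ℓ ^ α := by
  obtain ⟨hα0, hα1⟩ := hα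
  obtain ⟨hδ0, hδT⟩ := hδ
  have hTmem : T ∈ Icc (0 : ℝ) T := ⟨hT.le, le_rfl⟩
  have h0mem : (0 : ℝ) ∈ Icc (0 : ℝ) T := ⟨le_rfl, hT.le⟩
  have hℓ0 : 0 ≤ ℓ := (hτnn T hTmem).trans hτT
  have : Nonempty {x : ℝ // 0 < x ∧ x ≤ δ} := ⟨⟨δ, hδ0, le_rfl⟩⟩
  -- bound for |X| on [0,T]
  have hτub : ∀ t ∈ Icc (0 : ℝ) T, τ t ≤ ℓ := fun t ht =>
    (hτmono ht hTmem ht.2).trans hτT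
  have hXb : ∀ t ∈ Icc (0 : ℝ) T, |X t| ≤ lam * ℓ ^ α := by
    intro t ht
    have h := hHolder t ht 0 h0mem
    rw [hX0, sub_zero] at h
    refine h.trans (mul_le_mul_of_nonneg_left ?_ hlam)
    refine Real.rpow_le_rpow (abs_nonneg _) ?_ hα0.le
    rw [abs_le]
    constructor
    · linarith [hτnn t ht, hτnn 0 h0mem, hτub 0 h0mem]
    · linarith [hτnn 0 h0mem, hτub t ht]
  apply ciSup_le
  rintro ⟨δ', hδ'0, hδ'δ⟩
  simp only
  have hδ'T : δ' ≤ T := hδ'δ.trans hδT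
  -- the integrals are over subsets of [0,T]
  have hsub1 : Ioc (0 : ℝ) δ' ⊆ Icc 0 T := fun t ht => ⟨ht.1.le, ht.2.trans hδ'T⟩
  have hsub2 : Ioc δ' T ⊆ Icc 0 T := fun t ht => ⟨hδ'0.le.trans ht.1.le, ht.2⟩
  -- first integral bound
  have hA : (∫ t in Ioc (0 : ℝ) δ', (|X t| + |X (T - t)|)) ≤ δ' * (2 * lam * ℓ ^ α) := by
    have hconst : IntegrableOn (fun _ : ℝ => 2 * lam * ℓ ^ α) (Ioc (0 : ℝ) δ') := by
      refine integrableOn_const ?_ enorm_ne_top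
      rw [Real.volume_Ioc]
      exact ENNReal.ofReal_ne_top
    have := integral_mono_of_nonneg (f := fun t => |X t| + |X (T - t)|)
      (g := fun _ => 2 * lam * ℓ ^ α) (μ := volume.restrict (Ioc (0 : ℝ) δ'))
      (Filter.Eventually.of_forall fun t => by positivity) hconst ?_
    · calc _ ≤ _ := this
        _ = δ' * (2 * lam * ℓ ^ α) := by
          rw [setIntegral_const, Real.volume_real_Ioc_of_le (by linarith), smul_eq_mul,
            sub_zero]
    · filter_upwards [ae_restrict_mem measurableSet_Ioc] with t ht
      have h1 : t ∈ Icc (0 : ℝ) T := hsub1 ht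
      have h2 : T - t ∈ Icc (0 : ℝ) T := ⟨by linarith [ht.2.trans hδ'T], by linarith [ht.1]⟩
      have := hXb t h1
      have := hXb (T - t) h2
      linarith
  rcases eq_or_lt_of_le hℓ0 with hℓ | hℓ
  · -- ℓ = 0 : everything vanishes
    have hXz : ∀ t ∈ Icc (0 : ℝ) T, X t = 0 := by
      intro t ht
      have := hXb t ht
      rw [← hℓ, Real.zero_rpow hα0.ne', mul_zero] at this
      exact abs_eq_zero.1 (le_antisymm this (abs_nonneg _))
    have e1 : (∫ t in Ioc (0 : ℝ) δ', (|X t| + |X (T - t)|)) = 0 := by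
      apply setIntegral_eq_zero_of_forall_eq_zero
      intro t ht
      rw [hXz t (hsub1 ht), hXz (T - t) ⟨by linarith [ht.2.trans hδ'T], by linarith [ht.1]⟩]
      simp
    have e2 : (∫ t in Ioc δ' T, |X t - X (t - δ')|) = 0 := by
      apply setIntegral_eq_zero_of_forall_eq_zero
      intro t ht
      rw [hXz t (hsub2 ht), hXz (t - δ') ⟨by linarith [ht.1], by linarith [ht.2]⟩]
      simp
    rw [e1, e2, ← hℓ, Real.zero_rpow hα0.ne']
    simp
  -- ℓ > 0 : main case
  set c : ℝ := δ' * ℓ / T with hc_def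
  have hc : 0 < c := by positivity
  -- integrability facts for τ
  have hτint : IntegrableOn τ (Icc 0 T) := hτmono.integrableOn_isCompact isCompact_Icc
  have hτII : ∀ a b : ℝ, a ∈ Icc (0:ℝ) T → b ∈ Icc (0:ℝ) T → IntervalIntegrable τ volume a b := by
    intro a b ha hb
    rw [intervalIntegrable_iff]
    apply hτint.mono_set
    intro t ht
    rcases le_total a b with hab | hab
    · rw [uIoc_of_le hab] at ht; exact ⟨ha.1.trans ht.1.le, ht.2.trans hb.2⟩
    · rw [uIoc_of_ge hab] at ht; exact ⟨hb.1.trans ht.1.le, ht.2.trans ha.2⟩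
  have hτsh_mono : MonotoneOn (fun t => τ (t - δ')) (Icc δ' T) := by
    intro a ha b hb hab
    exact hτmono ⟨by linarith [ha.1], by linarith [ha.2]⟩
      ⟨by linarith [hb.1], by linarith [hb.2]⟩ (by linarith)
  have hτshint : IntegrableOn (fun t => τ (t - δ')) (Ioc δ' T) :=
    (hτsh_mono.integrableOn_isCompact isCompact_Icc).mono_set Ioc_subset_Icc_self
  have hτint2 : IntegrableOn τ (Ioc δ' T) := hτint.mono_set (fun t ht => hsub2 ht)
  -- key integral estimate for the increment of τ
  have hkey : (∫ t in Ioc δ' T, (τ t - τ (t - δ'))) ≤ δ' * ℓ := by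
    have hTd : T - δ' ∈ Icc (0:ℝ) T := ⟨by linarith, by linarith⟩
    have hd' : δ' ∈ Icc (0:ℝ) T := ⟨hδ'0.le, hδ'T⟩
    have i1 : (∫ t in Ioc δ' T, τ t) = ∫ t in δ'..T, τ t :=
      (intervalIntegral.integral_of_le hδ'T).symm
    have i2 : (∫ t in Ioc δ' T, τ (t - δ')) = ∫ t in (0:ℝ)..(T - δ'), τ t := by
      rw [← intervalIntegral.integral_of_le hδ'T,
        intervalIntegral.integral_comp_sub_right τ δ', sub_self]
    rw [integral_sub hτint2 hτshint, i1, i2]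
    have add1 : (∫ t in δ'..(T - δ'), τ t) + ∫ t in (T - δ')..T, τ t = ∫ t in δ'..T, τ t :=
      intervalIntegral.integral_add_adjacent_intervals (hτII _ _ hd' hTd) (hτII _ _ hTd hTmem)
    have add2 : (∫ t in (0:ℝ)..δ', τ t) + ∫ t in δ'..(T - δ'), τ t = ∫ t in (0:ℝ)..(T-δ'), τ t :=
      intervalIntegral.integral_add_adjacent_intervals (hτII _ _ h0mem hd') (hτII _ _ hd' hTd)
    have hup : (∫ t in (T - δ')..T, τ t) ≤ δ' * ℓ := by
      have : (∫ t in (T - δ')..T, τ t) ≤ ∫ _ in (T - δ')..T, ℓ := by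
        apply intervalIntegral.integral_mono_on (by linarith) (hτII _ _ hTd hTmem)
          intervalIntegrable_const
        intro t ht
        exact hτub t ⟨by linarith [ht.1], ht.2⟩
      rw [intervalIntegral.integral_const, smul_eq_mul] at this
      linarith
    have hlo : 0 ≤ ∫ t in (0:ℝ)..δ', τ t := by
      apply intervalIntegral.integral_nonneg hδ'0.le
      intro t ht
      exact hτnn t ⟨ht.1, ht.2.trans hδ'T⟩
    linarith
  -- second integral bound
  have hB : (∫ t in Ioc δ' T, |X t - X (t - δ')|) ≤
      lam * α * c ^ (α - 1) * (δ' * ℓ) + lam * ((1 - α) * c ^ α) * (T - δ') := by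
    set g : ℝ → ℝ := fun t => lam * α * c ^ (α - 1) * (τ t - τ (t - δ')) + lam * ((1 - α) * c ^ α)
      with hg_def
    have hgint : IntegrableOn g (Ioc δ' T) := by
      apply Integrable.add
      · exact ((hτint2.sub hτshint).const_mul _)
      · refine integrableOn_const ?_ enorm_ne_top
        rw [Real.volume_Ioc]
        exact ENNReal.ofReal_ne_top
    have hmono : (∫ t in Ioc δ' T, |X t - X (t - δ')|) ≤ ∫ t in Ioc δ' T, g t := by
      apply integral_mono_of_nonneg (Filter.Eventually.of_forall fun t => abs_nonneg _) hgint
      filter_upwards [ae_restrict_mem measurableSet_Ioc] with t ht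
      have h1 : t ∈ Icc (0:ℝ) T := hsub2 ht
      have h2 : t - δ' ∈ Icc (0:ℝ) T := ⟨by linarith [ht.1], by linarith [ht.2]⟩
      have hHol := hHolder t h1 (t - δ') h2
      have hx0 : 0 ≤ τ t - τ (t - δ') := by
        have := hτmono h2 h1 (by linarith [hδ'0])
        linarith
      have habs : |τ t - τ (t - δ')| = τ t - τ (t - δ') := abs_of_nonneg hx0
      have htan := rpow_le_tangent hx0 hc hα0 hα1
      calc |X t - X (t - δ')| ≤ lam * |τ t - τ (t - δ')| ^ α := hHol
        _ = lam * (τ t - τ (t - δ')) ^ α := by rw [habs]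
        _ ≤ lam * (α * c ^ (α - 1) * (τ t - τ (t - δ')) + (1 - α) * c ^ α) :=
          mul_le_mul_of_nonneg_left htan hlam
        _ = g t := by simp only [hg_def]; ring
    have hgval : (∫ t in Ioc δ' T, g t) =
        lam * α * c ^ (α - 1) * (∫ t in Ioc δ' T, (τ t - τ (t - δ'))) +
        lam * ((1 - α) * c ^ α) * (T - δ') := by
      have i1 : IntegrableOn (fun t => lam * α * c ^ (α - 1) * (τ t - τ (t - δ')))
          (Ioc δ' T) := (hτint2.sub hτshint).const_mul _
      have i2 : IntegrableOn (fun _ : ℝ => lam * ((1 - α) * c ^ α)) (Ioc δ' T) := by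
        refine integrableOn_const ?_ enorm_ne_top
        rw [Real.volume_Ioc]
        exact ENNReal.ofReal_ne_top
      simp only [hg_def]
      rw [integral_add i1 i2, integral_const_mul, setIntegral_const,
        Real.volume_real_Ioc_of_le (by linarith : δ' ≤ T), smul_eq_mul]
      ring
    have hcoef : 0 ≤ lam * α * c ^ (α - 1) := by positivity
    calc (∫ t in Ioc δ' T, |X t - X (t - δ')|) ≤ ∫ t in Ioc δ' T, g t := hmono
      _ = _ := hgval
      _ ≤ _ := by
          have := mul_le_mul_of_nonneg_left hkey hcoef
          linarith
  -- assemble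
  have hcα : c ^ (α - 1) * c = c ^ α := by
    rw [Real.rpow_sub_one hc.ne', div_mul_cancel₀ _ hc.ne']
  have hcval : c ^ α * T = T ^ (1 - α) * δ' ^ α * ℓ ^ α := by
    rw [hc_def, Real.div_rpow (by positivity) hT.le, Real.mul_rpow hδ'0.le hℓ0,
      Real.rpow_sub hT, Real.rpow_one]
    field_simp
  have hδ'α : δ' ^ α ≤ δ ^ α := Real.rpow_le_rpow hδ'0.le hδ'δ hα0.le
  have hB2 : lam * α * c ^ (α - 1) * (δ' * ℓ) + lam * ((1 - α) * c ^ α) * (T - δ') ≤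
      lam * T ^ (1 - α) * δ ^ α * ℓ ^ α := by
    have h1 : lam * α * c ^ (α - 1) * (δ' * ℓ) = lam * α * (c ^ α * T) := by
      have : δ' * ℓ = c * T := by
        rw [hc_def]; field_simp
      rw [this, ← hcα]; ring
    have h2 : lam * ((1 - α) * c ^ α) * (T - δ') ≤ lam * (1 - α) * (c ^ α * T) := by
      have hcαnn : 0 ≤ c ^ α := (Real.rpow_pos_of_pos hc α).le
      have hnn : 0 ≤ lam * (1 - α) * c ^ α * δ' :=
        mul_nonneg (mul_nonneg (mul_nonneg hlam (by linarith)) hcαnn) hδ'0.le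
      nlinarith [hnn]
    have h3 : lam * α * (c ^ α * T) + lam * (1 - α) * (c ^ α * T) = lam * (c ^ α * T) := by ring
    have h4 : lam * (c ^ α * T) ≤ lam * T ^ (1 - α) * δ ^ α * ℓ ^ α := by
      rw [hcval]
      have hℓα : 0 ≤ ℓ ^ α := Real.rpow_nonneg hℓ0 α
      have hTα : 0 ≤ T ^ (1 - α) := Real.rpow_nonneg hT.le _
      have := mul_le_mul_of_nonneg_left hδ'α
        (mul_nonneg (mul_nonneg hlam hTα) hℓα)
      nlinarith [this]
    linarith
  have hA2 : δ' * (2 * lam * ℓ ^ α) ≤ 2 * lam * δ * ℓ ^ α := by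
    have : 0 ≤ 2 * lam * ℓ ^ α := by positivity
    nlinarith
  linarith
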